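/- If a continuous function F : [0,T) → ℝ satisfies F(t) ≥ c·exp(∫₀ᵗ F(s) ds) for all t ∈ [0,T) with some constant c > 0, then T ≤ 1/c. (Hence any such F cannot exist globally in time: a quantity bounded below by the exponential of its own time integral blows up in finite time.) -/

import Mathlib

open MeasureTheory intervalIntegral Set

theorem exp_integral_lower_bound_blowup (T c : ℝ) (F : ℝ → ℝ) (hc : 0 < c)
    (hF : ContinuousOn F (Set.Ico 0 T))
    (hge : ∀ t ∈ Set.Ico (0:ℝ) T, F t ≥ c * Real.exp (∫ s in Set.Icc 0 t, F s)) :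
    T ≤ 1 / c := by
  by_contra hT
  push_neg at hT
  have hc1 : (0:ℝ) ≤ 1/c := le_of_lt (by positivity)
  -- key claim: every t in Ico 0 T satisfies t < 1/c
  have key : ∀ t ∈ Set.Ico (0:ℝ) T, t < 1 / c := by
    intro t1 ht1
    obtain ⟨ht10, ht1T⟩ := ht1
    set G : ℝ → ℝ := fun u => ∫ s in (0:ℝ)..u, F s with hG
    have hsub : Set.Icc (0:ℝ) t1 ⊆ Set.Ico 0 T := Set.Icc_subset_Ico_right ht1T
    have hFint : IntegrableOn F (Set.Icc 0 t1) volume :=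
      (hF.mono hsub).integrableOn_compact isCompact_Icc
    -- G equals integral over Icc for u ∈ [0, t1]
    have hGeq : ∀ u, 0 ≤ u → G u = ∫ s in Set.Icc 0 u, F s := by
      intro u hu
      rw [hG]
      simp only [intervalIntegral.integral_of_le hu,
        MeasureTheory.integral_Icc_eq_integral_Ioc]
    -- continuity of G on Icc 0 t1
    have hGcont : ContinuousOn G (Set.Icc 0 t1) := by
      have := intervalIntegral.continuousOn_primitive_interval (a := (0:ℝ)) (b := t1)
        (f := F) (μ := volume) (by rwa [Set.uIcc_of_le ht10])
      rwa [Set.uIcc_of_le ht10] at this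
    -- φ
    set φ : ℝ → ℝ := fun u => Real.exp (-(G u)) + c * u with hφ
    have hφcont : ContinuousOn φ (Set.Icc 0 t1) :=
      ((hGcont.neg.rexp).add (continuousOn_const.mul continuousOn_id))
    have hint : interior (Set.Icc (0:ℝ) t1) = Set.Ioo 0 t1 := interior_Icc
    have hφanti : AntitoneOn φ (Set.Icc 0 t1) := by
      apply antitoneOn_of_hasDerivWithinAt_nonpos (convex_Icc 0 t1) hφcont
        (f' := fun u => -(F u) * Real.exp (-(G u)) + c)
      · intro x hx
        rw [hint] at hx
        have hxmem : x ∈ Set.Ico 0 T := ⟨le_of_lt hx.1, lt_trans hx.2 ht1T⟩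
        have hFx : ContinuousAt F x :=
          hF.continuousAt (Ico_mem_nhds hx.1 hxmem.2)
        have hintg : IntervalIntegrable F volume 0 x := by
          rw [intervalIntegrable_iff_integrableOn_Icc_of_le (le_of_lt hx.1)]
          exact hFint.mono_set (Set.Icc_subset_Icc_right (le_of_lt hx.2))
        have hGd : HasDerivAt G (F x) x :=
          intervalIntegral.integral_hasDerivAt_right hintg
            ((hF.mono Set.Ioo_subset_Ico_self).stronglyMeasurableAtFilter isOpen_Ioo x
              ⟨hx.1, lt_trans hx.2 ht1T⟩) hFx
        have : HasDerivAt φ (-(F x) * Real.exp (-(G x)) + c) x := by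
          have h1 : HasDerivAt (fun u => Real.exp (-(G u))) (-(F x) * Real.exp (-(G x))) x := by
            have := (hGd.neg).exp
            simpa [mul_comm] using this
          exact (h1.add ((hasDerivAt_id x).const_mul c)).congr_deriv (by simp)
        exact this.hasDerivWithinAt
      · intro x hx
        rw [hint] at hx
        have hxmem : x ∈ Set.Ico 0 T := ⟨le_of_lt hx.1, lt_trans hx.2 ht1T⟩
        have hFge := hge x hxmem
        rw [← hGeq x (le_of_lt hx.1)] at hFge
        have hexp : (0:ℝ) < Real.exp (-(G x)) := Real.exp_pos _
        have : c ≤ F x * Real.exp (-(G x)) := by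
          calc c = c * Real.exp (G x) * Real.exp (-(G x)) := by
                rw [mul_assoc, ← Real.exp_add, add_neg_cancel, Real.exp_zero, mul_one]
            _ ≤ F x * Real.exp (-(G x)) :=
                mul_le_mul_of_nonneg_right hFge (le_of_lt hexp)
        nlinarith
    have h0 : φ 0 = 1 := by simp [hφ, hG]
    have ht1mem : t1 ∈ Set.Icc (0:ℝ) t1 := ⟨ht10, le_refl _⟩
    have h0mem : (0:ℝ) ∈ Set.Icc (0:ℝ) t1 := ⟨le_refl _, ht10⟩
    have := hφanti h0mem ht1mem ht10
    rw [h0] at this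
    have hexp : (0:ℝ) < Real.exp (-(G t1)) := Real.exp_pos _
    have : c * t1 < 1 := by
      have : Real.exp (-(G t1)) + c * t1 ≤ 1 := this
      linarith
    rw [lt_div_iff₀ hc]
    linarith [mul_comm c t1 ▸ this]
  have h1c : (1/c) ∈ Set.Ico (0:ℝ) T := ⟨hc1, hT⟩
  exact lt_irrefl _ (key _ h1c)
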